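/- The global function f_X of the sand automaton X is not P-injective (hence not injective): the two periodic configurations c with c_{2i} = 0, c_{2i+1} = 1 for all i, and c' with c'_{2i} = 0, c'_{2i+1} = 2 for all i, are distinct and satisfy f_X(c) = f_X(c') = c. -/

import Mathlib

/-- The extended integers `ℤ ∪ {-∞, +∞}`. -/
abbrev EZ : Type := WithBot (WithTop ℤ)

/-- Embedding of `ℤ` into the extended integers. -/
def finVal (n : ℤ) : EZ := ((n : WithTop ℤ) : EZ)

/-- The integer value of a finite extended integer (`0` on `±∞`). -/
def valZ (x : EZ) : ℤ := WithBot.recBotCoe 0 (fun y => WithTop.recTopCoe 0 id y) x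

/-- The measuring device `β_l^m`. -/
noncomputable def beta (l : ℕ) (m : ℤ) (n : EZ) : EZ :=
  if finVal (m + (l : ℤ)) < n then ⊤
  else if n < finVal (m - (l : ℤ)) then ⊥
  else WithBot.map (WithTop.map (fun k => k - m)) n

/-- Reference height: the value of `x` if finite, `0` if `x = ±∞`. -/
def refH (x : EZ) : ℤ := if x = ⊥ ∨ x = ⊤ then 0 else valZ x

/-- One-dimensional sandpile configurations. -/
abbrev Config : Type := ℤ → EZ

/-- The neighborhood sequence `d_r^i(c)`: the `2r`-tuple of measured differences. -/
noncomputable def nbhd (r : ℕ) (c : Config) (i : ℤ) : Fin (2 * r) → EZ :=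
  fun j => beta r (refH (c i))
    (c (i + (if (j : ℕ) < r then ((j : ℕ) : ℤ) - (r : ℤ) else ((j : ℕ) : ℤ) - (r : ℤ) + 1)))

/-- The global function of the sand automaton of radius `r` with local rule `lam`. -/
noncomputable def globalF (r : ℕ) (lam : (Fin (2 * r) → EZ) → ℤ) (c : Config) : Config :=
  fun i => if c i = ⊥ ∨ c i = ⊤ then c i
    else finVal (valZ (c i) + lam (nbhd r c i))

/-- Finite configurations. -/
def FiniteConf (c : Config) : Prop := ∃ k : ℕ, ∀ i : ℤ, (k : ℤ) ≤ |i| → c i = finVal 0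

/-- Periodic configurations. -/
def PeriodicConf (c : Config) : Prop := ∃ p : ℤ, p ≠ 0 ∧ ∀ i : ℤ, c (i + p) = c i


/-- The local rule of the sand automaton `X` (radius 2, arguments `(a,b,x,y)`):
returns `-1` on `(+∞,-,-,-)`, `(2,-,-,-)`, `(1,-1,-,-)`, `(1,-2,-,-)`, `(1,-∞,-,-)`,
`(0,-2,-,-)`, `(0,-∞,-,-)`, and `0` otherwise. -/
def lamX (v : Fin 4 → EZ) : ℤ :=
  if v 0 = ⊤ ∨ v 0 = finVal 2 then -1
  else if v 0 = finVal 1 ∧ (v 1 = finVal (-1) ∨ v 1 = finVal (-2) ∨ v 1 = ⊥) then -1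
  else if v 0 = finVal 0 ∧ (v 1 = finVal (-2) ∨ v 1 = ⊥) then -1
  else 0

@[simp] lemma finVal_injIff {a b : ℤ} : finVal a = finVal b ↔ a = b := by
  simp [finVal]

@[simp] lemma finVal_ne_bot (n : ℤ) : finVal n ≠ ⊥ := by simp [finVal]

@[simp] lemma finVal_ne_top (n : ℤ) : finVal n ≠ ⊤ := by
  simp [finVal]

@[simp] lemma finVal_eq_bot_iff (n : ℤ) : finVal n = ⊥ ↔ False := by simp

@[simp] lemma finVal_eq_top_iff (n : ℤ) : finVal n = ⊤ ↔ False := by simp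

@[simp] lemma finVal_lt_iff {a b : ℤ} : finVal a < finVal b ↔ a < b := by
  simp [finVal]

@[simp] lemma valZ_finVal (n : ℤ) : valZ (finVal n) = n := rfl

@[simp] lemma refH_finVal (n : ℤ) : refH (finVal n) = n := by
  simp [refH]

lemma beta_finVal (l : ℕ) (m n : ℤ) :
    beta l m (finVal n) = if m + (l:ℤ) < n then ⊤ else if n < m - (l:ℤ) then ⊥
      else finVal (n - m) := by
  simp only [beta, finVal_lt_iff]
  rfl

lemma nbhd_eval (c : Config) (i : ℤ) (j : Fin 4) :
    nbhd 2 c i j = beta 2 (refH (c i)) (c (i + ![-2,-1,1,2] j)) := by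
  fin_cases j <;> simp [nbhd]

theorem fixC (c : Config)
    (hc : ∀ i : ℤ, c (2 * i) = finVal 0 ∧ c (2 * i + 1) = finVal 1) :
    globalF 2 lamX c = c := by
  funext i
  rcases Int.even_or_odd i with ⟨k, hk⟩ | ⟨k, hk⟩
  · -- i = 2k, c i = 0
    have e0 : c i = finVal 0 := by rw [hk, ← two_mul]; exact (hc k).1
    have em1 : c (i + -1) = finVal 1 := by
      have := (hc (k-1)).2; rw [hk]; convert this using 2; ring
    have h0 : nbhd 2 c i 0 = finVal 0 := by
      rw [nbhd_eval, e0]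
      have em2 : c (i + -2) = finVal 0 := by
        have := (hc (k-1)).1; rw [hk]; convert this using 2; ring
      simp [em2, beta_finVal]
    have h1 : nbhd 2 c i 1 = finVal 1 := by
      rw [nbhd_eval, e0]
      simp [em1, beta_finVal]
    have hl : lamX (nbhd 2 c i) = 0 := by
      simp [lamX, h0, h1]
    simp [globalF, e0, hl]
  · -- i = 2k+1, c i = 1
    have e1 : c i = finVal 1 := by rw [hk]; exact (hc k).2
    have h0 : nbhd 2 c i 0 = finVal 0 := by
      rw [nbhd_eval, e1]
      have em2 : c (i + -2) = finVal 1 := by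
        have := (hc (k-1)).2; rw [hk]; convert this using 2; ring
      simp [em2, beta_finVal]
    have h1 : nbhd 2 c i 1 = finVal (-1) := by
      rw [nbhd_eval, e1]
      have em1 : c (i + -1) = finVal 0 := by
        have := (hc k).1; rw [hk]; convert this using 2; ring
      simp [em1, beta_finVal]
    have hl : lamX (nbhd 2 c i) = 0 := by
      simp [lamX, h0, h1]
    simp [globalF, e1, hl]

theorem fixC' (c c' : Config)
    (hc : ∀ i : ℤ, c (2 * i) = finVal 0 ∧ c (2 * i + 1) = finVal 1)
    (hc' : ∀ i : ℤ, c' (2 * i) = finVal 0 ∧ c' (2 * i + 1) = finVal 2) :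
    globalF 2 lamX c' = c := by
  funext i
  rcases Int.even_or_odd i with ⟨k, hk⟩ | ⟨k, hk⟩
  · have e0 : c' i = finVal 0 := by rw [hk, ← two_mul]; exact (hc' k).1
    have h0 : nbhd 2 c' i 0 = finVal 0 := by
      rw [nbhd_eval, e0]
      have em2 : c' (i + -2) = finVal 0 := by
        have := (hc' (k-1)).1; rw [hk]; convert this using 2; ring
      simp [em2, beta_finVal]
    have h1 : nbhd 2 c' i 1 = finVal 2 := by
      rw [nbhd_eval, e0]
      have em1 : c' (i + -1) = finVal 2 := by
        have := (hc' (k-1)).2; rw [hk]; convert this using 2; ring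
      simp [em1, beta_finVal]
    have hl : lamX (nbhd 2 c' i) = 0 := by
      simp [lamX, h0, h1]
    have hci : c i = finVal 0 := by rw [hk, ← two_mul]; exact (hc k).1
    simp [globalF, e0, hl, hci]
  · have e2 : c' i = finVal 2 := by rw [hk]; exact (hc' k).2
    have h0 : nbhd 2 c' i 0 = finVal 0 := by
      rw [nbhd_eval, e2]
      have em2 : c' (i + -2) = finVal 2 := by
        have := (hc' (k-1)).2; rw [hk]; convert this using 2; ring
      simp [em2, beta_finVal]
    have h1 : nbhd 2 c' i 1 = finVal (-2) := by
      rw [nbhd_eval, e2]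
      have em1 : c' (i + -1) = finVal 0 := by
        have := (hc' k).1; rw [hk]; convert this using 2; ring
      simp [em1, beta_finVal]
    have hl : lamX (nbhd 2 c' i) = -1 := by
      simp [lamX, h0, h1]
    have hci : c i = finVal 1 := by rw [hk]; exact (hc k).2
    simp [globalF, e2, hl, hci]

/-- `f_X` is not `P`-injective (hence not injective): the two periodic configurations
`c` (with `c_{2i} = 0`, `c_{2i+1} = 1`) and `c'` (with `c'_{2i} = 0`, `c'_{2i+1} = 2`)
are distinct and satisfy `f_X(c) = f_X(c') = c`. -/
theorem X_not_P_injective (c c' : Config)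
    (hc : ∀ i : ℤ, c (2 * i) = finVal 0 ∧ c (2 * i + 1) = finVal 1)
    (hc' : ∀ i : ℤ, c' (2 * i) = finVal 0 ∧ c' (2 * i + 1) = finVal 2) :
    c ≠ c' ∧ PeriodicConf c ∧ PeriodicConf c' ∧
    globalF 2 lamX c = c ∧ globalF 2 lamX c' = c ∧
    ¬ Set.InjOn (globalF 2 lamX) {x : Config | PeriodicConf x} ∧
    ¬ Function.Injective (globalF 2 lamX) := by
  
  have hne : c ≠ c' := by
    intro h
    have h1 : c 1 = finVal 1 := by have := (hc 0).2; simpa using this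
    have h2 : c' 1 = finVal 2 := by have := (hc' 0).2; simpa using this
    rw [h, h2] at h1
    exact absurd (finVal_injIff.mp h1) (by norm_num)
  have hpc : PeriodicConf c := by
    refine ⟨2, by norm_num, fun i => ?_⟩
    rcases Int.even_or_odd i with ⟨k, hk⟩ | ⟨k, hk⟩
    · have h2 : i + 2 = 2*(k+1) := by omega
      have h1 : i = 2*k := by omega
      rw [h2, h1, (hc (k+1)).1, (hc k).1]
    · have h2 : i + 2 = 2*(k+1)+1 := by omega
      rw [h2, hk, (hc (k+1)).2, (hc k).2]
  have hpc' : PeriodicConf c' := by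
    refine ⟨2, by norm_num, fun i => ?_⟩
    rcases Int.even_or_odd i with ⟨k, hk⟩ | ⟨k, hk⟩
    · have h2 : i + 2 = 2*(k+1) := by omega
      have h1 : i = 2*k := by omega
      rw [h2, h1, (hc' (k+1)).1, (hc' k).1]
    · have h2 : i + 2 = 2*(k+1)+1 := by omega
      rw [h2, hk, (hc' (k+1)).2, (hc' k).2]
  have hf : globalF 2 lamX c = c := fixC c hc
  have hf' : globalF 2 lamX c' = c := fixC' c c' hc hc'
  refine ⟨hne, hpc, hpc', hf, hf', ?_, ?_⟩
  · intro hinj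
    exact hne (hinj hpc hpc' (by rw [hf, hf']))
  · intro hinj
    exact hne (hinj (by rw [hf, hf']))
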